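/- arXiv:1702.07629 — 5 statements merged into one kernel-verified Lean document; each statement's English description precedes it below -/
import Mathlib

section
/- Let A be a unital complex Banach algebra, M a unital A-bimodule, and n ≥ 2. For every 2-local derivation Δ from M_n(A) into M_n(M) there exists a derivation D from M_n(A) into M_n(M) such that Δ(t) = D(t) for every t in the linear span of the matrix units {e_{ij}}_{i,j=1}^n. -/
open MulOpposite Matrix

variable (A M : Type*) [NormedRing A] [NormedAlgebra ℂ A] [CompleteSpace A]
  [AddCommGroup M] [Module ℂ M] [Module A M] [Module Aᵐᵒᵖ M]
  [SMulCommClass A Aᵐᵒᵖ M] [IsScalarTower ℂ A M] [IsScalarTower ℂ Aᵐᵒᵖ M]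

/-- `D : A → M` is a derivation from the Banach algebra `A` into the unital
`A`-bimodule `M`: a `ℂ`-linear map with the Leibniz rule (the right action of
`A` on `M` is written via `Aᵐᵒᵖ`). -/
def IsDerivation (D : A → M) : Prop :=
  IsLinearMap ℂ D ∧ ∀ x y : A, D (x * y) = op y • D x + x • D y

variable {n : ℕ}

/-- The left action of `Mₙ(A)` on `Mₙ(M)`: `(x · Y)_{ij} = Σ_k x_{ik} · Y_{kj}`. -/
def matL (x : Matrix (Fin n) (Fin n) A) (Y : Matrix (Fin n) (Fin n) M) :
    Matrix (Fin n) (Fin n) M :=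
  Matrix.of fun i j => ∑ k, x i k • Y k j

/-- The right action of `Mₙ(A)` on `Mₙ(M)`: `(Y · x)_{ij} = Σ_k Y_{ik} · x_{kj}`. -/
def matR (Y : Matrix (Fin n) (Fin n) M) (x : Matrix (Fin n) (Fin n) A) :
    Matrix (Fin n) (Fin n) M :=
  Matrix.of fun i j => ∑ k, op (x k j) • Y i k

/-- A derivation from `Mₙ(A)` into the `Mₙ(A)`-bimodule `Mₙ(M)`. -/
def IsMatDerivation (D : Matrix (Fin n) (Fin n) A → Matrix (Fin n) (Fin n) M) : Prop :=
  IsLinearMap ℂ D ∧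
    ∀ x y : Matrix (Fin n) (Fin n) A, D (x * y) = matR A M (D x) y + matL A M x (D y)

/-- A 2-local derivation from `Mₙ(A)` into `Mₙ(M)`: for each pair of points there
is a derivation agreeing with `Δ` at both of them. -/
def Is2LocalMatDerivation (Δ : Matrix (Fin n) (Fin n) A → Matrix (Fin n) (Fin n) M) : Prop :=
  ∀ x y : Matrix (Fin n) (Fin n) A,
    ∃ D : Matrix (Fin n) (Fin n) A → Matrix (Fin n) (Fin n) M,
      IsMatDerivation A M D ∧ Δ x = D x ∧ Δ y = D y

/-- The matrix unit `e_{ij}`: the unit of `A` at position `(i,j)`, zeros elsewhere. -/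
def matUnit (i j : Fin n) : Matrix (Fin n) (Fin n) A :=
  Matrix.single i j 1

/-- The linear span of the matrix units `{e_{ij}}`. -/
noncomputable def unitSpan (n : ℕ) : Submodule ℂ (Matrix (Fin n) (Fin n) A) :=
  Submodule.span ℂ (Set.range fun p : Fin n × Fin n => Matrix.single p.1 p.2 (1 : A))

/-- The set `Dₙ(A)` of diagonal matrices in `Mₙ(A)`. -/
def diagSet (n : ℕ) : Set (Matrix (Fin n) (Fin n) A) :=
  {x | ∀ i j : Fin n, i ≠ j → x i j = 0}

set_option linter.unusedSectionVars false
set_option maxHeartbeats 1000000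

lemma matL_apply (x : Matrix (Fin n) (Fin n) A) (Y : Matrix (Fin n) (Fin n) M) (i j : Fin n) :
    matL A M x Y i j = ∑ k, x i k • Y k j := rfl

lemma matR_apply (Y : Matrix (Fin n) (Fin n) M) (x : Matrix (Fin n) (Fin n) A) (i j : Fin n) :
    matR A M Y x i j = ∑ k, op (x k j) • Y i k := rfl

lemma op_sum' {ι : Type*} (s : Finset ι) (f : ι → A) :
    op (∑ k ∈ s, f k) = ∑ k ∈ s, op (f k) :=
  map_sum (opAddEquiv : A ≃+ Aᵐᵒᵖ) f s

lemma matL_add_left (x y : Matrix (Fin n) (Fin n) A) (Y : Matrix (Fin n) (Fin n) M) :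
    matL A M (x + y) Y = matL A M x Y + matL A M y Y := by
  ext i j
  simp [matL_apply, Matrix.add_apply, add_smul, Finset.sum_add_distrib]

lemma matL_add_right (x : Matrix (Fin n) (Fin n) A) (Y Z : Matrix (Fin n) (Fin n) M) :
    matL A M x (Y + Z) = matL A M x Y + matL A M x Z := by
  ext i j
  simp [matL_apply, Matrix.add_apply, smul_add, Finset.sum_add_distrib]

lemma matL_sub_right (x : Matrix (Fin n) (Fin n) A) (Y Z : Matrix (Fin n) (Fin n) M) :
    matL A M x (Y - Z) = matL A M x Y - matL A M x Z := by
  ext i j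
  simp [matL_apply, Matrix.sub_apply, smul_sub, Finset.sum_sub_distrib]

lemma matL_smul_left (c : ℂ) (x : Matrix (Fin n) (Fin n) A) (Y : Matrix (Fin n) (Fin n) M) :
    matL A M (c • x) Y = c • matL A M x Y := by
  ext i j
  simp [matL_apply, Matrix.smul_apply, smul_assoc, Finset.smul_sum]

lemma matL_zero_left (Y : Matrix (Fin n) (Fin n) M) : matL A M 0 Y = 0 := by
  ext i j
  simp [matL_apply]

lemma matR_add_left (Y Z : Matrix (Fin n) (Fin n) M) (x : Matrix (Fin n) (Fin n) A) :
    matR A M (Y + Z) x = matR A M Y x + matR A M Z x := by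
  ext i j
  simp [matR_apply, Matrix.add_apply, smul_add, Finset.sum_add_distrib]

lemma matR_sub_left (Y Z : Matrix (Fin n) (Fin n) M) (x : Matrix (Fin n) (Fin n) A) :
    matR A M (Y - Z) x = matR A M Y x - matR A M Z x := by
  ext i j
  simp [matR_apply, Matrix.sub_apply, smul_sub, Finset.sum_sub_distrib]

lemma matR_add_right (Y : Matrix (Fin n) (Fin n) M) (x y : Matrix (Fin n) (Fin n) A) :
    matR A M Y (x + y) = matR A M Y x + matR A M Y y := by
  ext i j
  simp [matR_apply, Matrix.add_apply, op_add, add_smul, Finset.sum_add_distrib]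

lemma matR_smul_right (c : ℂ) (Y : Matrix (Fin n) (Fin n) M) (x : Matrix (Fin n) (Fin n) A) :
    matR A M Y (c • x) = c • matR A M Y x := by
  ext i j
  simp [matR_apply, Matrix.smul_apply, op_smul, smul_assoc, Finset.smul_sum]

lemma matR_zero_left (x : Matrix (Fin n) (Fin n) A) : matR A M 0 x = 0 := by
  ext i j
  simp [matR_apply]

lemma matR_zero_right (Y : Matrix (Fin n) (Fin n) M) : matR A M Y 0 = 0 := by
  ext i j
  simp [matR_apply]

lemma matR_sum_left {ι : Type*} (s : Finset ι) (f : ι → Matrix (Fin n) (Fin n) M)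
    (x : Matrix (Fin n) (Fin n) A) :
    matR A M (∑ k ∈ s, f k) x = ∑ k ∈ s, matR A M (f k) x := by
  ext i j
  simp only [matR_apply, Matrix.sum_apply, Finset.smul_sum]
  exact Finset.sum_comm

lemma matR_sum_right {ι : Type*} (s : Finset ι) (Y : Matrix (Fin n) (Fin n) M)
    (f : ι → Matrix (Fin n) (Fin n) A) :
    matR A M Y (∑ k ∈ s, f k) = ∑ k ∈ s, matR A M Y (f k) := by
  ext i j
  simp only [matR_apply, Matrix.sum_apply, op_sum', Finset.sum_smul]
  exact Finset.sum_comm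

lemma matL_sum_right {ι : Type*} (s : Finset ι) (x : Matrix (Fin n) (Fin n) A)
    (f : ι → Matrix (Fin n) (Fin n) M) :
    matL A M x (∑ k ∈ s, f k) = ∑ k ∈ s, matL A M x (f k) := by
  ext i j
  simp only [matL_apply, Matrix.sum_apply, Finset.smul_sum]
  exact Finset.sum_comm

lemma matL_mul (x y : Matrix (Fin n) (Fin n) A) (Y : Matrix (Fin n) (Fin n) M) :
    matL A M (x * y) Y = matL A M x (matL A M y Y) := by
  ext i j
  simp only [matL_apply, Matrix.mul_apply, Finset.sum_smul, Finset.smul_sum,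
    mul_smul]
  exact Finset.sum_comm

lemma matR_mul (Y : Matrix (Fin n) (Fin n) M) (x y : Matrix (Fin n) (Fin n) A) :
    matR A M (matR A M Y x) y = matR A M Y (x * y) := by
  ext i j
  simp only [matR_apply, Matrix.mul_apply, op_sum', Finset.sum_smul, Finset.smul_sum, op_mul,
    mul_smul]
  exact Finset.sum_comm

lemma matL_matR (x : Matrix (Fin n) (Fin n) A) (Y : Matrix (Fin n) (Fin n) M)
    (y : Matrix (Fin n) (Fin n) A) :
    matL A M x (matR A M Y y) = matR A M (matL A M x Y) y := by
  ext i j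
  simp only [matL_apply, matR_apply, Finset.smul_sum]
  rw [Finset.sum_comm]
  apply Finset.sum_congr rfl
  intro k _
  apply Finset.sum_congr rfl
  intro l _
  exact smul_comm _ _ _

lemma matL_one (Y : Matrix (Fin n) (Fin n) M) : matL A M 1 Y = Y := by
  ext i j
  simp [matL_apply, Matrix.one_apply, ite_smul]

lemma matR_one (Y : Matrix (Fin n) (Fin n) M) : matR A M Y 1 = Y := by
  ext i j
  simp [matR_apply, Matrix.one_apply, apply_ite op, ite_smul]

/-- The inner derivation associated with `a ∈ Mₙ(M)`. -/
def adA (a : Matrix (Fin n) (Fin n) M) :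
    Matrix (Fin n) (Fin n) A → Matrix (Fin n) (Fin n) M :=
  fun x => matR A M a x - matL A M x a

lemma adA_isDer (a : Matrix (Fin n) (Fin n) M) : IsMatDerivation A M (adA A M a) := by
  constructor
  · constructor
    · intro x y
      simp only [adA, matR_add_right, matL_add_left]
      abel
    · intro c x
      simp only [adA, matR_smul_right, matL_smul_left, smul_sub]
  · intro x y
    show matR A M a (x * y) - matL A M (x * y) a = _
    rw [adA, adA, matR_sub_left, matL_sub_right, ← matR_mul, matL_matR, ← matL_mul]
    abel

lemma matUnit_mul (p q r s : Fin n) :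
    matUnit A p q * matUnit A r s = if q = r then matUnit A p s else 0 := by
  by_cases h : q = r
  · subst h
    simp [matUnit, Matrix.single_mul_single_same]
  · simp [matUnit, Matrix.single_mul_single_of_ne (c := (1 : A)) (i := p) (j := q) (k := r) (h := h), h]

lemma sum_matUnit_diag : ∑ k, matUnit A k k = (1 : Matrix (Fin n) (Fin n) A) := by
  ext i j
  by_cases h : i = j
  · subst h
    simp [Matrix.sum_apply, matUnit, Matrix.single, Matrix.one_apply]
  · rw [Matrix.sum_apply, Finset.sum_eq_zero, Matrix.one_apply, if_neg h]
    intro x _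
    simp only [matUnit, Matrix.single, Matrix.of_apply, ite_eq_right_iff, and_imp]
    intro h1 h2
    exact absurd (h1.symm.trans h2) h

lemma adA_unit_apply (a : Matrix (Fin n) (Fin n) M) (p q i j : Fin n) :
    adA A M a (matUnit A p q) i j =
      (if j = q then a i p else 0) - (if i = p then a q j else 0) := by
  show matR A M a (matUnit A p q) i j - matL A M (matUnit A p q) a i j = _
  congr 1
  · rw [matR_apply]
    have : ∀ k : Fin n, op (matUnit A p q k j) • a i k
        = if q = j then (if p = k then a i k else 0) else 0 := by
      intro k
      simp only [matUnit, Matrix.single, Matrix.of_apply]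
      by_cases h1 : p = k <;> by_cases h2 : q = j <;> simp [h1, h2]
    simp_rw [this]
    by_cases h2 : q = j
    · subst h2
      simp [Finset.sum_ite_eq]
    · rw [if_neg (show ¬ j = q from fun hh => h2 hh.symm)]
      simp [h2]
  · rw [matL_apply]
    have : ∀ k : Fin n, matUnit A p q i k • a k j
        = if p = i then (if q = k then a k j else 0) else 0 := by
      intro k
      simp only [matUnit, Matrix.single, Matrix.of_apply]
      by_cases h1 : p = i <;> by_cases h2 : q = k <;> simp [h1, h2]
    simp_rw [this]
    by_cases h1 : p = i
    · subst h1
      simp [Finset.sum_ite_eq]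
    · rw [if_neg (show ¬ i = p from fun hh => h1 hh.symm)]
      simp [h1]

lemma exists_adA_units (hn : 0 < n) {D : Matrix (Fin n) (Fin n) A → Matrix (Fin n) (Fin n) M}
    (hD : IsMatDerivation A M D) :
    ∃ b, ∀ p q, D (matUnit A p q) = adA A M b (matUnit A p q) := by
  set z : Fin n := ⟨0, hn⟩ with hzdef
  refine ⟨∑ k, matR A M (D (matUnit A k z)) (matUnit A z k), fun p q => ?_⟩
  have hD0 : D 0 = 0 := hD.1.map_zero
  have h1 : matR A M (∑ k, matR A M (D (matUnit A k z)) (matUnit A z k)) (matUnit A p q)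
      = matR A M (D (matUnit A p z)) (matUnit A z q) := by
    rw [matR_sum_left]
    have he : ∀ k, matR A M (matR A M (D (matUnit A k z)) (matUnit A z k)) (matUnit A p q)
        = if k = p then matR A M (D (matUnit A p z)) (matUnit A z q) else 0 := by
      intro k
      rw [matR_mul, matUnit_mul]
      by_cases h : k = p
      · subst h
        simp
      · simp [h, matR_zero_right]
    simp_rw [he]
    simp [Finset.sum_ite_eq']
  have h2 : ∀ k, matL A M (matUnit A p q) (D (matUnit A k z))
      = (if k = q then D (matUnit A p z) else 0)
        - matR A M (D (matUnit A p q)) (matUnit A k z) := by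
    intro k
    have hl := hD.2 (matUnit A p q) (matUnit A k z)
    rw [matUnit_mul] at hl
    rw [eq_sub_iff_add_eq, add_comm]
    rw [← hl]
    by_cases h : q = k
    · subst h
      simp
    · rw [if_neg h, hD0, if_neg (show ¬ k = q from fun hh => h hh.symm)]
  have h3 : matL A M (matUnit A p q) (∑ k, matR A M (D (matUnit A k z)) (matUnit A z k))
      = matR A M (D (matUnit A p z)) (matUnit A z q) - D (matUnit A p q) := by
    rw [matL_sum_right]
    have he : ∀ k, matL A M (matUnit A p q) (matR A M (D (matUnit A k z)) (matUnit A z k))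
        = matR A M ((if k = q then D (matUnit A p z) else 0)
            - matR A M (D (matUnit A p q)) (matUnit A k z)) (matUnit A z k) := by
      intro k
      rw [matL_matR, h2 k]
    simp_rw [he, matR_sub_left, Finset.sum_sub_distrib]
    congr 1
    · have : ∀ k : Fin n, matR A M (if k = q then D (matUnit A p z) else 0) (matUnit A z k)
          = if k = q then matR A M (D (matUnit A p z)) (matUnit A z q) else 0 := by
        intro k
        by_cases h : k = q
        · subst h; simp
        · simp [h, matR_zero_left]
      simp_rw [this]
      simp [Finset.sum_ite_eq']
    · have : ∀ k : Fin n, matR A M (matR A M (D (matUnit A p q)) (matUnit A k z)) (matUnit A z k)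
          = matR A M (D (matUnit A p q)) (matUnit A k k) := by
        intro k
        rw [matR_mul, matUnit_mul, if_pos rfl]
      simp_rw [this]
      rw [← matR_sum_right, sum_matUnit_diag, matR_one]
  show D (matUnit A p q) = matR A M _ (matUnit A p q) - matL A M (matUnit A p q) _
  rw [h1, h3]
  abel

lemma adA_zero_arg (b : Matrix (Fin n) (Fin n) M) : adA A M b 0 = 0 :=
  (adA_isDer A M b).1.map_zero

lemma exists_adA (hn : 0 < n) {D : Matrix (Fin n) (Fin n) A → Matrix (Fin n) (Fin n) M}
    (hD : IsMatDerivation A M D) :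
    ∃ b, ∀ t ∈ unitSpan A n, D t = adA A M b t := by
  obtain ⟨b, hb⟩ := exists_adA_units A M hn hD
  refine ⟨b, fun t ht => ?_⟩
  induction ht using Submodule.span_induction with
  | mem x h =>
    obtain ⟨⟨p, q⟩, rfl⟩ := h
    exact hb p q
  | zero => rw [hD.1.map_zero, (adA_isDer A M b).1.map_zero]
  | add x y hx hy ihx ihy => rw [hD.1.map_add, (adA_isDer A M b).1.map_add, ihx, ihy]
  | smul c x hx ih => rw [hD.1.map_smul, (adA_isDer A M b).1.map_smul, ih]

/-- The entrywise trace `Mₙ(M) → M`. -/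
def trM (Y : Matrix (Fin n) (Fin n) M) : M := ∑ i, Y i i

lemma trM_add (X Y : Matrix (Fin n) (Fin n) M) : trM M (X + Y) = trM M X + trM M Y := by
  simp [trM, Matrix.add_apply, Finset.sum_add_distrib]

lemma trM_smul (c : ℂ) (Y : Matrix (Fin n) (Fin n) M) : trM M (c • Y) = c • trM M Y := by
  simp [trM, Matrix.smul_apply, Finset.smul_sum]

lemma trM_zero : trM M (0 : Matrix (Fin n) (Fin n) M) = 0 := by simp [trM]

lemma trM_matR_unit (Y : Matrix (Fin n) (Fin n) M) (i j : Fin n) :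
    trM M (matR A M Y (matUnit A j i)) = Y i j := by
  rw [trM]
  have he : ∀ p : Fin n, matR A M Y (matUnit A j i) p p
      = if p = i then Y p j else 0 := by
    intro p
    rw [matR_apply]
    have : ∀ k : Fin n, op (matUnit A j i k p) • Y p k
        = if i = p then (if j = k then Y p k else 0) else 0 := by
      intro k
      simp only [matUnit, Matrix.single, Matrix.of_apply]
      by_cases h1 : j = k <;> by_cases h2 : i = p <;> simp [h1, h2]
    simp_rw [this]
    by_cases h2 : i = p
    · subst h2
      simp [Finset.sum_ite_eq]
    · rw [if_neg (show ¬ p = i from fun hh => h2 hh.symm)]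
      simp [h2]
  simp_rw [he]
  simp [Finset.sum_ite_eq']

lemma trM_adA_unit (b : Matrix (Fin n) (Fin n) M) (p q : Fin n) :
    trM M (adA A M b (matUnit A p q)) = 0 := by
  rw [trM]
  have he : ∀ i : Fin n, adA A M b (matUnit A p q) i i
      = (if i = q then b i p else 0) - (if i = p then b q i else 0) :=
    fun i => adA_unit_apply A M b p q i i
  simp_rw [he]
  rw [Finset.sum_sub_distrib]
  simp [Finset.sum_ite_eq']

lemma trM_deriv_span (hn : 0 < n) {D : Matrix (Fin n) (Fin n) A → Matrix (Fin n) (Fin n) M}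
    (hD : IsMatDerivation A M D) {t : Matrix (Fin n) (Fin n) A} (ht : t ∈ unitSpan A n) :
    trM M (D t) = 0 := by
  obtain ⟨b, hb⟩ := exists_adA A M hn hD
  rw [hb t ht]
  clear hb
  induction ht using Submodule.span_induction with
  | mem x h =>
    obtain ⟨⟨p, q⟩, rfl⟩ := h
    exact trM_adA_unit A M b p q
  | zero => rw [(adA_isDer A M b).1.map_zero, trM_zero]
  | add x y hx hy ihx ihy => rw [(adA_isDer A M b).1.map_add, trM_add, ihx, ihy, add_zero]
  | smul c x hx ih => rw [(adA_isDer A M b).1.map_smul, trM_smul, ih, smul_zero]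

lemma deriv_tau (hn : 0 < n) {D : Matrix (Fin n) (Fin n) A → Matrix (Fin n) (Fin n) M}
    (hD : IsMatDerivation A M D) {x y : Matrix (Fin n) (Fin n) A}
    (hxy : x * y ∈ unitSpan A n) :
    trM M (matR A M (D x) y) + trM M (matL A M x (D y)) = 0 := by
  have h0 : trM M (D (x * y)) = 0 := trM_deriv_span A M hn hD hxy
  rw [hD.2 x y, trM_add] at h0
  exact h0

lemma mem_unitSpan (p q : Fin n) : matUnit A p q ∈ unitSpan A n :=
  Submodule.subset_span ⟨(p, q), rfl⟩

lemma mul_unit_mem {t : Matrix (Fin n) (Fin n) A} (ht : t ∈ unitSpan A n) (p q : Fin n) :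
    t * matUnit A p q ∈ unitSpan A n := by
  induction ht using Submodule.span_induction with
  | mem x h =>
    obtain ⟨⟨r, s⟩, rfl⟩ := h
    show matUnit A r s * matUnit A p q ∈ unitSpan A n
    rw [matUnit_mul]
    by_cases h : s = p
    · rw [if_pos h]; exact mem_unitSpan A r q
    · rw [if_neg h]; exact Submodule.zero_mem _
  | zero => rw [zero_mul]; exact Submodule.zero_mem _
  | add x y hx hy ihx ihy => rw [add_mul]; exact Submodule.add_mem _ ihx ihy
  | smul c x hx ih => rw [smul_mul_assoc]; exact Submodule.smul_mem _ _ ih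

section Delta

variable {Δ : Matrix (Fin n) (Fin n) A → Matrix (Fin n) (Fin n) M}

lemma pinAd (hn : 0 < n) (hΔ : Is2LocalMatDerivation A M Δ)
    (x y : Matrix (Fin n) (Fin n) A) :
    ∃ b, (x ∈ unitSpan A n → Δ x = adA A M b x) ∧ (y ∈ unitSpan A n → Δ y = adA A M b y) := by
  obtain ⟨D, hD, e1, e2⟩ := hΔ x y
  obtain ⟨b, hb⟩ := exists_adA A M hn hD
  exact ⟨b, fun h => e1.trans (hb x h), fun h => e2.trans (hb y h)⟩

lemma delta_tau (hn : 0 < n) (hΔ : Is2LocalMatDerivation A M Δ)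
    {x : Matrix (Fin n) (Fin n) A} (hx : x ∈ unitSpan A n) (p q : Fin n) :
    trM M (matR A M (Δ x) (matUnit A p q)) + trM M (matL A M x (Δ (matUnit A p q))) = 0 := by
  obtain ⟨D, hD, e1, e2⟩ := hΔ x (matUnit A p q)
  rw [e1, e2]
  exact deriv_tau A M hn hD (mul_unit_mem A hx p q)

lemma delta_entry (hn : 0 < n) (hΔ : Is2LocalMatDerivation A M Δ)
    {x : Matrix (Fin n) (Fin n) A} (hx : x ∈ unitSpan A n) (i j : Fin n) :
    Δ x i j = - trM M (matL A M x (Δ (matUnit A j i))) := by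
  have h := delta_tau A M hn hΔ hx j i
  rw [trM_matR_unit] at h
  exact eq_neg_of_add_eq_zero_left h

lemma delta_add (hn : 0 < n) (hΔ : Is2LocalMatDerivation A M Δ)
    {x y : Matrix (Fin n) (Fin n) A} (hx : x ∈ unitSpan A n) (hy : y ∈ unitSpan A n) :
    Δ (x + y) = Δ x + Δ y := by
  ext i j
  rw [Matrix.add_apply, delta_entry A M hn hΔ (Submodule.add_mem _ hx hy) i j,
    delta_entry A M hn hΔ hx i j, delta_entry A M hn hΔ hy i j,
    matL_add_left, trM_add, neg_add]

lemma delta_unit_zero (hn : 0 < n) (hΔ : Is2LocalMatDerivation A M Δ)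
    {p q i j : Fin n} (hi : i ≠ p) (hj : j ≠ q) :
    Δ (matUnit A p q) i j = 0 := by
  obtain ⟨b, h1, _⟩ := pinAd A M hn hΔ (matUnit A p q) (matUnit A p q)
  rw [h1 (mem_unitSpan A p q), adA_unit_apply, if_neg hj, if_neg hi, sub_zero]

lemma delta_unit_diag (hn : 0 < n) (hΔ : Is2LocalMatDerivation A M Δ) (p : Fin n) :
    Δ (matUnit A p p) p p = 0 := by
  obtain ⟨b, h1, _⟩ := pinAd A M hn hΔ (matUnit A p p) (matUnit A p p)
  rw [h1 (mem_unitSpan A p p), adA_unit_apply, if_pos rfl]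
  exact sub_self _

lemma delta_eq_adA_units (hn : 2 ≤ n) (hΔ : Is2LocalMatDerivation A M Δ) :
    ∃ a, ∀ p q, Δ (matUnit A p q) = adA A M a (matUnit A p q) := by
  have hn0 : 0 < n := by omega
  set z : Fin n := ⟨0, hn0⟩ with hzdef
  refine ⟨Matrix.of (fun i p => Δ (matUnit A p z) i z), fun p q => ?_⟩
  ext i j
  rw [adA_unit_apply]
  simp only [Matrix.of_apply]
  by_cases hj : j = q
  · subst hj
    rw [if_pos rfl]
    by_cases hi : i = p
    · subst hi
      rw [if_pos rfl]
      -- goal: Δ (matUnit A i j) i j = Δ (matUnit A i z) i z - Δ (matUnit A j z) j z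
      by_cases hij : i = j
      · subst hij
        rw [sub_self]
        exact delta_unit_diag A M hn0 hΔ i
      · by_cases hjz : j = z
        · subst hjz
          rw [delta_unit_diag A M hn0 hΔ z, sub_zero]
        · by_cases hiz : i = z
          · subst hiz
            rw [delta_unit_diag A M hn0 hΔ z, zero_sub]
            obtain ⟨b, h1, h2⟩ := pinAd A M hn0 hΔ (matUnit A z j) (matUnit A j z)
            have v1 : Δ (matUnit A z j) z j = b z z - b j j := by
              rw [h1 (mem_unitSpan A z j), adA_unit_apply, if_pos rfl, if_pos rfl]
            have v2 : Δ (matUnit A j z) j z = b j j - b z z := by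
              rw [h2 (mem_unitSpan A j z), adA_unit_apply, if_pos rfl, if_pos rfl]
            rw [v1, v2]
            abel
          · -- generic case : i ≠ j, i ≠ z, j ≠ z
            obtain ⟨b, h1, h2⟩ := pinAd A M hn0 hΔ
              (matUnit A i j + matUnit A j z) (matUnit A i z)
            have hb1 := h1 (Submodule.add_mem _ (mem_unitSpan A i j) (mem_unitSpan A j z))
            have hb2 := h2 (mem_unitSpan A i z)
            rw [delta_add A M hn0 hΔ (mem_unitSpan A i j) (mem_unitSpan A j z),
              (adA_isDer A M b).1.map_add] at hb1
            have E1 : Δ (matUnit A i j) i j + Δ (matUnit A j z) i j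
                = adA A M b (matUnit A i j) i j + adA A M b (matUnit A j z) i j := by
              rw [← Matrix.add_apply, ← Matrix.add_apply, hb1]
            have E2 : Δ (matUnit A i j) j z + Δ (matUnit A j z) j z
                = adA A M b (matUnit A i j) j z + adA A M b (matUnit A j z) j z := by
              rw [← Matrix.add_apply, ← Matrix.add_apply, hb1]
            have v1 : adA A M b (matUnit A i j) i j = b i i - b j j := by
              rw [adA_unit_apply, if_pos rfl, if_pos rfl]
            have v2 : adA A M b (matUnit A j z) i j = 0 := by
              rw [adA_unit_apply, if_neg hjz, if_neg hij, sub_zero]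
            have v3 : adA A M b (matUnit A i j) j z = 0 := by
              rw [adA_unit_apply, if_neg (show ¬ (z : Fin n) = j from fun hh => hjz hh.symm),
                if_neg (Ne.symm hij), sub_zero]
            have v4 : adA A M b (matUnit A j z) j z = b j j - b z z := by
              rw [adA_unit_apply, if_pos rfl, if_pos rfl]
            have v5 : Δ (matUnit A i z) i z = b i i - b z z := by
              rw [hb2, adA_unit_apply, if_pos rfl, if_pos rfl]
            rw [v1, v2, add_zero, delta_unit_zero A M hn0 hΔ hij hjz, add_zero] at E1
            rw [v3, v4, zero_add, delta_unit_zero A M hn0 hΔ (Ne.symm hij)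
              (show (z : Fin n) ≠ j from fun hh => hjz hh.symm), zero_add] at E2
            rw [E1, E2, v5]
            abel
    · -- i ≠ p, j = q : column case
      rw [if_neg hi]
      obtain ⟨b, h1, h2⟩ := pinAd A M hn0 hΔ (matUnit A p j) (matUnit A p z)
      have v1 : Δ (matUnit A p j) i j = b i p := by
        rw [h1 (mem_unitSpan A p j), adA_unit_apply, if_pos rfl, if_neg hi, sub_zero]
      have v2 : Δ (matUnit A p z) i z = b i p := by
        rw [h2 (mem_unitSpan A p z), adA_unit_apply, if_pos rfl, if_neg hi, sub_zero]
      rw [v1, v2, sub_zero]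
  · rw [if_neg hj]
    by_cases hi : i = p
    · subst hi
      rw [if_pos rfl, zero_sub]
      obtain ⟨b, h1, h2⟩ := pinAd A M hn0 hΔ (matUnit A i q) (matUnit A j z)
      have v1 : Δ (matUnit A i q) i j = - b q j := by
        rw [h1 (mem_unitSpan A i q), adA_unit_apply, if_neg hj, if_pos rfl, zero_sub]
      have v2 : Δ (matUnit A j z) q z = b q j := by
        rw [h2 (mem_unitSpan A j z), adA_unit_apply, if_pos rfl,
          if_neg (show ¬ q = j from fun hh => hj hh.symm), sub_zero]
      rw [v1, v2]
    · rw [if_neg hi, sub_zero]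
      exact delta_unit_zero A M hn0 hΔ hi hj

end Delta

/-- for every 2-local derivation `Δ : Mₙ(A) → Mₙ(M)` (`n ≥ 2`) there is a
derivation `D` agreeing with `Δ` on the linear span of the matrix units. -/
theorem exists_derivation_eq_on_matrixUnits (n : ℕ) (hn : 2 ≤ n)
    (Δ : Matrix (Fin n) (Fin n) A → Matrix (Fin n) (Fin n) M)
    (hΔ : Is2LocalMatDerivation A M Δ) :
    ∃ D : Matrix (Fin n) (Fin n) A → Matrix (Fin n) (Fin n) M,
      IsMatDerivation A M D ∧ ∀ t ∈ unitSpan A n, Δ t = D t := by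
  have hn0 : 0 < n := by omega
  obtain ⟨a, ha⟩ := delta_eq_adA_units A M hn hΔ
  refine ⟨adA A M a, adA_isDer A M a, fun t ht => ?_⟩
  ext i j
  have h1 := delta_tau A M hn0 hΔ ht j i
  have h2 := deriv_tau A M hn0 (adA_isDer A M a) (mul_unit_mem A ht j i)
  rw [ha j i] at h1
  rw [trM_matR_unit] at h1 h2
  exact add_right_cancel (h1.trans h2.symm)
end

section
/- Let A be a unital complex Banach algebra, M a unital A-bimodule, n ≥ 2, and let Δ be a 2-local derivation from M_n(A) into M_n(M) that vanishes on the linear span of the matrix units {e_{ij}}_{i,j=1}^n. Then for all 1 ≤ i, j ≤ n, Δ maps the subspace A_{ij} = e_{ii} M_n(A) e_{jj} into e_{ii} M_n(M) e_{jj}; that is, Δ(x) = e_{ii} Δ(x) e_{jj} for every x ∈ A_{ij}. -/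
open MulOpposite Matrix

variable (A M : Type*) [NormedRing A] [NormedAlgebra ℂ A] [CompleteSpace A]
  [AddCommGroup M] [Module ℂ M] [Module A M] [Module Aᵐᵒᵖ M]
  [SMulCommClass A Aᵐᵒᵖ M] [IsScalarTower ℂ A M] [IsScalarTower ℂ Aᵐᵒᵖ M]

variable {n : ℕ}

/-- if a 2-local derivation `Δ : Mₙ(A) → Mₙ(M)` (`n ≥ 2`) vanishes on the
span of the matrix units, then `Δ` maps `A_{ij} = e_{ii} Mₙ(A) e_{jj}` into
`e_{ii} Mₙ(M) e_{jj}`, i.e. `Δ x = e_{ii} · Δ x · e_{jj}` for `x ∈ A_{ij}`. -/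
theorem twoLocal_maps_corner_into_corner (n : ℕ) (hn : 2 ≤ n)
    (Δ : Matrix (Fin n) (Fin n) A → Matrix (Fin n) (Fin n) M)
    (hΔ : Is2LocalMatDerivation A M Δ)
    (hvan : ∀ t ∈ unitSpan A n, Δ t = 0) :
    ∀ (i j : Fin n) (x : Matrix (Fin n) (Fin n) A),
      x = matUnit A i i * x * matUnit A j j →
      Δ x = matL A M (matUnit A i i) (matR A M (Δ x) (matUnit A j j)) := by
  have matL_zero : ∀ y : Matrix (Fin n) (Fin n) A,
      matL A M y (0 : Matrix (Fin n) (Fin n) M) = 0 := by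
    intro y; ext a b; simp [matL]
  have matR_zero : ∀ y : Matrix (Fin n) (Fin n) A,
      matR A M (0 : Matrix (Fin n) (Fin n) M) y = 0 := by
    intro y; ext a b; simp [matR]
  intro i j x hx
  have hei : Δ (matUnit A i i) = 0 := hvan _ (Submodule.subset_span ⟨(i, i), rfl⟩)
  have hej : Δ (matUnit A j j) = 0 := hvan _ (Submodule.subset_span ⟨(j, j), rfl⟩)
  have hii : matUnit A i i * matUnit A i i = matUnit A i i := by
    simp [matUnit, Matrix.single_mul_single_same]
  have hjj : matUnit A j j * matUnit A j j = matUnit A j j := by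
    simp [matUnit, Matrix.single_mul_single_same]
  have hxi : matUnit A i i * x = x := by
    conv_lhs => rw [hx]
    rw [← mul_assoc, ← mul_assoc, hii, ← hx]
  have hxj : x * matUnit A j j = x := by
    conv_lhs => rw [hx]
    rw [mul_assoc, hjj, ← hx]
  obtain ⟨D, ⟨hDlin, hDleib⟩, h1, h2⟩ := hΔ x (matUnit A i i)
  have hD0 : D (matUnit A i i) = 0 := by rw [← h2, hei]
  have step1 : Δ x = matL A M (matUnit A i i) (Δ x) := by
    rw [h1]
    calc D x = D (matUnit A i i * x) := by rw [hxi]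
      _ = matR A M (D (matUnit A i i)) x + matL A M (matUnit A i i) (D x) := hDleib _ _
      _ = matL A M (matUnit A i i) (D x) := by rw [hD0, matR_zero, zero_add]
  obtain ⟨D', ⟨hD'lin, hD'leib⟩, h1', h2'⟩ := hΔ x (matUnit A j j)
  have hD'0 : D' (matUnit A j j) = 0 := by rw [← h2', hej]
  have step2 : Δ x = matR A M (Δ x) (matUnit A j j) := by
    rw [h1']
    calc D' x = D' (x * matUnit A j j) := by rw [hxj]
      _ = matR A M (D' x) (matUnit A j j) + matL A M x (D' (matUnit A j j)) := hD'leib _ _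
      _ = matR A M (D' x) (matUnit A j j) := by rw [hD'0, matL_zero, add_zero]
  conv_rhs => rw [← step2]
  exact step1
end

section
/- Let A be a unital complex Banach algebra, M a unital A-bimodule, n ≥ 3, and let Δ be a 2-local derivation from M_n(A) into M_n(M) that vanishes on the set D_n(A) of diagonal matrices and on the linear span of the matrix units {e_{ij}}_{i,j=1}^n. Then for every x ∈ M_n(A) and every k with 1 ≤ k ≤ n, the (k,k)-entry of Δ(x) is zero: Δ(x)_{kk} = 0. -/
open MulOpposite Matrix

variable (A M : Type*) [NormedRing A] [NormedAlgebra ℂ A] [CompleteSpace A]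
  [AddCommGroup M] [Module ℂ M] [Module A M] [Module Aᵐᵒᵖ M]
  [SMulCommClass A Aᵐᵒᵖ M] [IsScalarTower ℂ A M] [IsScalarTower ℂ Aᵐᵒᵖ M]

variable {n : ℕ}

section Aux

set_option linter.unusedSectionVars false

lemma unit_smul_cancel {u : A} (hu : IsUnit u) {m : M} (h : u • m = 0) : m = 0 := by
  obtain ⟨v, rfl⟩ := hu
  have hm : ((v⁻¹ : Aˣ) : A) • ((v : A) • m) = m := by
    rw [← mul_smul, Units.inv_mul, one_smul]
  rw [h, smul_zero] at hm
  exact hm.symm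

lemma op_unit_smul_cancel {u : A} (hu : IsUnit u) {m : M} (h : op u • m = 0) : m = 0 := by
  obtain ⟨v, rfl⟩ := hu
  have hm : (op ((v⁻¹ : Aˣ) : A)) • ((op (v : A)) • m) = m := by
    rw [← mul_smul, ← op_mul, Units.mul_inv, op_one, one_smul]
  rw [h, smul_zero] at hm
  exact hm.symm

end Aux


/-- if a 2-local derivation `Δ : Mₙ(A) → Mₙ(M)` (`n ≥ 3`) vanishes on all
diagonal matrices and on the span of the matrix units, then all diagonal entries of
`Δ x` vanish: `(Δ x)_{kk} = 0`. -/
theorem twoLocal_diagonal_entries_zero (n : ℕ) (hn : 3 ≤ n)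
    (Δ : Matrix (Fin n) (Fin n) A → Matrix (Fin n) (Fin n) M)
    (hΔ : Is2LocalMatDerivation A M Δ)
    (hdiag : ∀ x ∈ diagSet A n, Δ x = 0)
    (hvan : ∀ t ∈ unitSpan A n, Δ t = 0) :
    ∀ (x : Matrix (Fin n) (Fin n) A) (k : Fin n), Δ x k k = 0 := by
  intro x k
  classical
  set t : A := x k k with ht
  set c : ℂ := ((‖t‖ + 1 : ℝ) : ℂ) with hcdef
  have hcR : (0:ℝ) < ‖t‖ + 1 := by positivity
  have hcne : c ≠ 0 := by
    rw [hcdef, Ne, Complex.ofReal_eq_zero]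
    exact ne_of_gt hcR
  set u : A := 1 + c⁻¹ • t with hudef
  have hu : IsUnit u := by
    have hnorm : ‖-(c⁻¹ • t)‖ < 1 := by
      rw [norm_neg, norm_smul, norm_inv, hcdef, Complex.norm_real, Real.norm_eq_abs,
        abs_of_pos hcR, ← div_eq_inv_mul]
      exact (div_lt_one hcR).mpr (by linarith)
    refine ⟨Units.oneSub (-(c⁻¹ • t)) hnorm, ?_⟩
    rw [Units.val_oneSub, sub_neg_eq_add, hudef]
  set E : Matrix (Fin n) (Fin n) A := Matrix.single k k (1:A) with hEdef
  set y : Matrix (Fin n) (Fin n) A := Matrix.single k k u with hydef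
  obtain ⟨D, ⟨hDlin, hDmul⟩, hDx, hDy⟩ := hΔ x y
  have hy0 : D y = 0 := by
    rw [← hDy]
    apply hdiag
    intro i j hij
    rw [hydef]
    apply Matrix.single_apply_of_ne
    rintro ⟨rfl, rfl⟩
    exact hij rfl
  set F : Matrix (Fin n) (Fin n) M := D E with hFdef
  have hEy : E * y = y := by
    rw [hEdef, hydef, Matrix.single_mul_single_same, one_mul]
  have hyE : y * E = y := by
    rw [hEdef, hydef, Matrix.single_mul_single_same, mul_one]
  -- row k of F vanishes
  have hrow : ∀ j, F k j = 0 := by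
    intro j
    have h1 := hDmul y E
    rw [hyE, hy0] at h1
    have h2 := congrArg (fun Z => Z k j) h1
    simp only [Matrix.add_apply, Matrix.zero_apply] at h2
    have e1 : matR A M (0 : Matrix (Fin n) (Fin n) M) E k j = 0 := by
      simp [matR]
    have e2 : matL A M y F k j = u • F k j := by
      simp only [matL, Matrix.of_apply]
      rw [Finset.sum_eq_single k]
      · rw [hydef, Matrix.single_apply_same]
      · intro b _ hb
        rw [hydef, Matrix.single_apply_of_col_ne _ _ (Ne.symm hb), zero_smul]
      · exact fun h => absurd (Finset.mem_univ k) h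
    rw [e1, e2, zero_add] at h2
    exact unit_smul_cancel A M hu h2.symm
  -- column k of F vanishes
  have hcol : ∀ i, F i k = 0 := by
    intro i
    have h1 := hDmul E y
    rw [hEy, hy0] at h1
    have h2 := congrArg (fun Z => Z i k) h1
    simp only [Matrix.add_apply, Matrix.zero_apply] at h2
    have e1 : matL A M E (0 : Matrix (Fin n) (Fin n) M) i k = 0 := by
      simp [matL]
    have e2 : matR A M F y i k = op u • F i k := by
      simp only [matR, Matrix.of_apply]
      rw [Finset.sum_eq_single k]
      · rw [hydef, Matrix.single_apply_same]
      · intro b _ hb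
        rw [hydef, Matrix.single_apply_of_row_ne (Ne.symm hb) _ _ _,
          op_zero, zero_smul]
      · exact fun h => absurd (Finset.mem_univ k) h
    rw [e1, e2, add_zero] at h2
    exact op_unit_smul_cancel A M hu h2.symm
  -- the corner identity
  have h5 : E * (x * E) = Matrix.single k k t := by
    rw [hEdef, ht, ← mul_assoc]
    ext i j
    by_cases hi : i = k <;> by_cases hj : j = k <;>
      simp [hi, hj, Matrix.mul_apply, Matrix.single, ite_and, Finset.sum_ite_eq,
        eq_comm (a := k)]
  have h6 : E * (x * E) = c • y + (-c) • E := by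
    rw [h5, hydef, hEdef, smul_single, smul_single, ← single_add]
    congr 1
    rw [hudef, smul_add, smul_smul, mul_inv_cancel₀ hcne, one_smul, neg_smul,
      add_comm (c • (1:A)), add_assoc, add_neg_cancel, add_zero]
  have hL : D (E * (x * E)) = (-c) • F := by
    rw [h6, hDlin.map_add, hDlin.map_smul, hDlin.map_smul, hy0, smul_zero, zero_add, hFdef]
  have hkey := hDmul E (x * E)
  rw [hL] at hkey
  have h7 := congrArg (fun Z => Z k k) hkey
  simp only [Matrix.add_apply, Matrix.smul_apply] at h7
  rw [hrow k, smul_zero] at h7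
  have e1 : matR A M F (x * E) k k = 0 := by
    simp only [matR, Matrix.of_apply]
    refine Finset.sum_eq_zero fun p _ => ?_
    rw [hrow p, smul_zero]
  have e2 : matL A M E (D (x * E)) k k = D (x * E) k k := by
    simp only [matL, Matrix.of_apply]
    rw [Finset.sum_eq_single k]
    · rw [hEdef, Matrix.single_apply_same, one_smul]
    · intro b _ hb
      rw [hEdef, Matrix.single_apply_of_col_ne _ _ (Ne.symm hb), zero_smul]
    · exact fun h => absurd (Finset.mem_univ k) h
  rw [e1, e2, zero_add] at h7
  have hS := hDmul x E
  have h8 := congrArg (fun Z => Z k k) hS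
  simp only [Matrix.add_apply] at h8
  have e3 : matR A M (D x) E k k = D x k k := by
    simp only [matR, Matrix.of_apply]
    rw [Finset.sum_eq_single k]
    · rw [hEdef, Matrix.single_apply_same, op_one, one_smul]
    · intro b _ hb
      rw [hEdef, Matrix.single_apply_of_row_ne (Ne.symm hb) _ _ _,
        op_zero, zero_smul]
    · exact fun h => absurd (Finset.mem_univ k) h
  have e4 : matL A M x F k k = 0 := by
    simp only [matL, Matrix.of_apply]
    refine Finset.sum_eq_zero fun p _ => ?_
    rw [hcol p, smul_zero]
  rw [e3, e4, add_zero] at h8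
  have h9 : D x k k = 0 := by rw [← h8, ← h7]
  rw [hDx, h9]
end

section
/- Let A be a unital complex Banach algebra, M a unital A-bimodule, n ≥ 3, and let Δ be a 2-local derivation from M_n(A) into M_n(M) that vanishes on the set D_n(A) of diagonal matrices and on the linear span of the matrix units {e_{ij}}_{i,j=1}^n. If x ∈ M_n(A) is a matrix whose (k,s)-entry equals the unit e of A, then the (k,s)-entry of Δ(x) is zero: Δ(x)_{ks} = 0. -/
open MulOpposite Matrix

variable (A M : Type*) [NormedRing A] [NormedAlgebra ℂ A] [CompleteSpace A]
  [AddCommGroup M] [Module ℂ M] [Module A M] [Module Aᵐᵒᵖ M]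
  [SMulCommClass A Aᵐᵒᵖ M] [IsScalarTower ℂ A M] [IsScalarTower ℂ Aᵐᵒᵖ M]

variable {n : ℕ}

/-- if a 2-local derivation `Δ : Mₙ(A) → Mₙ(M)` (`n ≥ 3`) vanishes on all
diagonal matrices and on the span of the matrix units, and `x` has `(k,s)`-entry equal
to the unit `e` of `A`, then `(Δ x)_{ks} = 0`. -/
theorem twoLocal_unit_entry_zero (n : ℕ) (hn : 3 ≤ n)
    (Δ : Matrix (Fin n) (Fin n) A → Matrix (Fin n) (Fin n) M)
    (hΔ : Is2LocalMatDerivation A M Δ)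
    (hdiag : ∀ x ∈ diagSet A n, Δ x = 0)
    (hvan : ∀ t ∈ unitSpan A n, Δ t = 0) :
    ∀ (x : Matrix (Fin n) (Fin n) A) (k s : Fin n), x k s = 1 → Δ x k s = 0 := by
  intro x k s hx1
  obtain ⟨D, ⟨hlin, hleib⟩, hDx, hDE⟩ := hΔ x (matUnit A s k)
  have hE0 : D (matUnit A s k) = 0 := by
    rw [← hDE]
    exact hvan _ (Submodule.subset_span ⟨(s, k), rfl⟩)
  have hExE : matUnit A s k * x * matUnit A s k = matUnit A s k := by
    ext i j
    simp [matUnit, Matrix.mul_apply, Matrix.single, Finset.sum_ite_eq,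
      ite_and, hx1]
    split_ifs <;> rfl
  have h1 : D (matUnit A s k * x * matUnit A s k)
      = matR A M (matR A M (D (matUnit A s k)) x + matL A M (matUnit A s k) (D x))
          (matUnit A s k)
        + matL A M (matUnit A s k * x) (D (matUnit A s k)) := by
    rw [hleib, hleib]
  rw [hExE, hE0] at h1
  have h2 := congrFun (congrFun h1 s) k
  rw [hDx]
  simpa [matR, matL, matUnit, Matrix.single, apply_ite op, ite_smul,
    Finset.sum_ite_eq, ite_and] using h2.symm
end

section
/- Let A be a unital complex Banach algebra, M a unital A-bimodule, n ≥ 3, and let Δ be a 2-local derivation from M_n(A) into M_n(M) that vanishes on the set D_n(A) of diagonal matrices and on the linear span of the matrix units {e_{ij}}_{i,j=1}^n. Let k ≠ s and let x, y ∈ M_n(A) be matrices with x_{ij} = y_{ij} for all (i,j) ≠ (s,k). Then Δ(x)_{ks} = Δ(y)_{ks}. -/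
open MulOpposite Matrix

variable (A M : Type*) [NormedRing A] [NormedAlgebra ℂ A] [CompleteSpace A]
  [AddCommGroup M] [Module ℂ M] [Module A M] [Module Aᵐᵒᵖ M]
  [SMulCommClass A Aᵐᵒᵖ M] [IsScalarTower ℂ A M] [IsScalarTower ℂ Aᵐᵒᵖ M]

variable {n : ℕ}

/-- if a 2-local derivation `Δ : Mₙ(A) → Mₙ(M)` (`n ≥ 3`) vanishes on all
diagonal matrices and on the span of the matrix units, `k ≠ s`, and `x, y` agree at all
entries except possibly `(s,k)`, then `(Δ x)_{ks} = (Δ y)_{ks}`. -/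
theorem twoLocal_entry_independent (n : ℕ) (hn : 3 ≤ n)
    (Δ : Matrix (Fin n) (Fin n) A → Matrix (Fin n) (Fin n) M)
    (hΔ : Is2LocalMatDerivation A M Δ)
    (hdiag : ∀ x ∈ diagSet A n, Δ x = 0)
    (hvan : ∀ t ∈ unitSpan A n, Δ t = 0) :
    ∀ (k s : Fin n), k ≠ s →
      ∀ x y : Matrix (Fin n) (Fin n) A,
        (∀ i j : Fin n, (i, j) ≠ (s, k) → x i j = y i j) →
        Δ x k s = Δ y k s := by
  intro k s hks x y hxy
  obtain ⟨D, ⟨hlin, hleib⟩, hx, hy⟩ := hΔ x y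
  have hz : ∀ i j, (i, j) ≠ (s, k) → (x - y) i j = 0 := by
    intro i j h
    simp [Matrix.sub_apply, hxy i j h]
  have hes : matUnit A s s * (x - y) = x - y := by
    ext i j
    rw [Matrix.mul_apply]
    by_cases hi : i = s
    · subst hi
      simp [matUnit, Matrix.single]
    · rw [hz i j (by simp [Prod.ext_iff, hi])]
      apply Finset.sum_eq_zero
      intro p _
      simp [matUnit, Matrix.single, Ne.symm hi]
  have hsub : D (x - y) = D x - D y := (IsLinearMap.mk' D hlin).map_sub x y
  have key : D (x - y) k s = 0 := by
    conv_lhs => rw [← hes, hleib]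
    have h1 : matR A M (D (matUnit A s s)) (x - y) k s = 0 := by
      simp only [matR, Matrix.of_apply]
      apply Finset.sum_eq_zero
      intro p _
      rw [hz p s (by simp [Prod.ext_iff, Ne.symm hks])]
      simp
    have h2 : matL A M (matUnit A s s) (D (x - y)) k s = 0 := by
      simp only [matL, Matrix.of_apply]
      apply Finset.sum_eq_zero
      intro p _
      have : matUnit A s s k p = 0 := by
        simp [matUnit, Matrix.single, Ne.symm hks]
      rw [this, zero_smul]
    show matR A M (D (matUnit A s s)) (x - y) k s +
      matL A M (matUnit A s s) (D (x - y)) k s = 0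
    rw [h1, h2, add_zero]
  rw [hx, hy]
  have h := congrFun (congrFun hsub k) s
  rw [key, Matrix.sub_apply] at h
  exact sub_eq_zero.mp h.symm
end
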